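/- If a continuous map f of a closed bounded interval into itself has a periodic point of least period 3, then for every positive integer m, f has a periodic point of least period m. -/

import Mathlib

open Set

/-- Fixed point lemma via IVT. -/
lemma fix_of_cross {g : ℝ → ℝ} {s t u v : ℝ}
    (hg : ContinuousOn g (Icc s t)) (hu : u ∈ Icc s t) (hv : v ∈ Icc s t)
    (h1 : g u ≤ u) (h2 : v ≤ g v) : ∃ y ∈ Icc s t, g y = y := by
  have hsub : uIcc u v ⊆ Icc s t := by
    rw [uIcc]
    exact Icc_subset_Icc (le_min hu.1 hv.1) (max_le hu.2 hv.2)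
  have hcont : ContinuousOn (fun w => g w - w) (uIcc u v) :=
    (hg.mono hsub).sub continuousOn_id
  have h0 : (0 : ℝ) ∈ uIcc ((fun w => g w - w) u) ((fun w => g w - w) v) := by
    apply Icc_subset_uIcc
    constructor <;> simp <;> linarith
  obtain ⟨y, hy, hy0⟩ := intermediate_value_uIcc hcont h0
  exact ⟨y, hsub hy, by dsimp at hy0; linarith⟩

/-- Covering lemma, increasing orientation. -/
lemma cov1 {g : ℝ → ℝ} {u v r1 r2 : ℝ} (huv : u ≤ v)
    (hg : ContinuousOn g (Icc u v)) (h1 : g u = r1) (h2 : g v = r2) (hr : r1 ≤ r2) :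
    ∃ s t, u ≤ s ∧ s ≤ t ∧ t ≤ v ∧ g '' Icc s t = Icc r1 r2 := by
  set A := Icc u v ∩ g ⁻¹' {r1} with hA
  have hAcl : IsClosed A := hg.preimage_isClosed_of_isClosed isClosed_Icc isClosed_singleton
  have hAne : A.Nonempty := ⟨u, ⟨le_refl u, huv⟩, h1⟩
  have hAbdd : BddAbove A := bddAbove_Icc.mono inter_subset_left
  set c := sSup A with hc
  have hcA : c ∈ A := hAcl.csSup_mem hAne hAbdd
  have hcmem : c ∈ Icc u v := hcA.1
  have hgc : g c = r1 := hcA.2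
  set B := Icc c v ∩ g ⁻¹' {r2} with hB
  have hBcl : IsClosed B :=
    (hg.mono (Icc_subset_Icc hcmem.1 le_rfl)).preimage_isClosed_of_isClosed
      isClosed_Icc isClosed_singleton
  have hBne : B.Nonempty := ⟨v, ⟨hcmem.2, le_refl v⟩, h2⟩
  have hBbdd : BddBelow B := bddBelow_Icc.mono inter_subset_left
  set d := sInf B with hd
  have hdB : d ∈ B := hBcl.csInf_mem hBne hBbdd
  have hgd : g d = r2 := hdB.2
  have hcd : c ≤ d := hdB.1.1
  have hdv : d ≤ v := hdB.1.2
  have hsub : Icc c d ⊆ Icc u v := Icc_subset_Icc hcmem.1 hdv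
  refine ⟨c, d, hcmem.1, hcd, hdv, ?_⟩
  apply Subset.antisymm
  · rintro _ ⟨w, hw, rfl⟩
    constructor
    · by_contra hlt
      push_neg at hlt
      have hwc : c < w := lt_of_le_of_ne hw.1 (fun h => by rw [← h] at hlt; linarith)
      have : r1 ∈ Icc (g w) (g d) := ⟨hlt.le, by linarith⟩
      obtain ⟨z, hz, hgz⟩ := intermediate_value_Icc hw.2
        (hg.mono (Icc_subset_Icc (hsub hw).1 hdv)) this
      have hzA : z ∈ A := ⟨⟨le_trans hcmem.1 (le_trans hwc.le hz.1), le_trans hz.2 hdv⟩, hgz⟩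
      have := le_csSup hAbdd hzA
      linarith [hz.1]
    · by_contra hlt
      push_neg at hlt
      have hwd : w < d := lt_of_le_of_ne hw.2 (fun h => by rw [h] at hlt; linarith)
      have : r2 ∈ Icc (g c) (g w) := ⟨by linarith, hlt.le⟩
      obtain ⟨z, hz, hgz⟩ := intermediate_value_Icc hw.1
        (hg.mono (Icc_subset_Icc hcmem.1 (hsub hw).2)) this
      have hzB : z ∈ B := ⟨⟨hz.1, le_trans hz.2 (le_trans hw.2 hdv)⟩, hgz⟩
      have := csInf_le hBbdd hzB
      linarith [hz.2]
  · rw [← hgc, ← hgd]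
    exact intermediate_value_Icc hcd (hg.mono hsub)

/-- Covering lemma, decreasing orientation. -/
lemma cov2 {g : ℝ → ℝ} {u v r1 r2 : ℝ} (huv : u ≤ v)
    (hg : ContinuousOn g (Icc u v)) (h1 : g u = r2) (h2 : g v = r1) (hr : r1 ≤ r2) :
    ∃ s t, u ≤ s ∧ s ≤ t ∧ t ≤ v ∧ g '' Icc s t = Icc r1 r2 := by
  set g' : ℝ → ℝ := fun w => g (u + v - w) with hg'def
  have hrefl : Continuous fun w : ℝ => u + v - w := continuous_const.sub continuous_id
  have hmaps : MapsTo (fun w : ℝ => u + v - w) (Icc u v) (Icc u v) := fun w hw =>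
    ⟨by simp at hw ⊢; linarith [hw.2], by simp at hw ⊢; linarith [hw.1]⟩
  have hg'c : ContinuousOn g' (Icc u v) := hg.comp hrefl.continuousOn hmaps
  have e1 : g' u = r1 := by simp [hg'def, h2]
  have e2 : g' v = r2 := by simp [hg'def, h1]
  obtain ⟨s, t, hus, hst, htv, him⟩ := cov1 huv hg'c e1 e2 hr
  refine ⟨u + v - t, u + v - s, by linarith, by linarith, by linarith, ?_⟩
  have : Icc (u + v - t) (u + v - s) = (fun w : ℝ => u + v - w) '' Icc s t := by
    rw [show (fun w : ℝ => u + v - w) = (fun w : ℝ => (u + v) - w) from rfl,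
      Set.image_const_sub_Icc]
  rw [this, Set.image_image]
  exact him

/-- Continuity of iterates. -/
lemma iter_cont {a b : ℝ} {f : ℝ → ℝ} (hc : ContinuousOn f (Icc a b))
    (hmaps : MapsTo f (Icc a b) (Icc a b)) :
    ∀ n, ContinuousOn f^[n] (Icc a b) := by
  intro n
  induction n with
  | zero => simpa using continuousOn_id
  | succ n ih =>
      rw [Function.iterate_succ']
      exact hc.comp ih (hmaps.iterate n)

lemma case1 (a b : ℝ) (f : ℝ → ℝ)
    (hc : ContinuousOn f (Icc a b)) (hmaps : MapsTo f (Icc a b) (Icc a b))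
    (p q r : ℝ) (hp : p ∈ Icc a b) (hq : q ∈ Icc a b) (hr : r ∈ Icc a b)
    (hpq : p < q) (hqr : q < r) (h1 : f p = q) (h2 : f q = r) (h3 : f r = p)
    (m : ℕ) (hm : 0 < m) :
    ∃ y ∈ Icc a b, f^[m] y = y ∧ ∀ k, 0 < k → k < m → f^[k] y ≠ y := by
  have hI1 : Icc q r ⊆ Icc a b := Icc_subset_Icc hq.1 hr.2
  have hI0 : Icc p q ⊆ Icc a b := Icc_subset_Icc hp.1 hq.2
  have hitc := iter_cont hc hmaps
  -- m = 1 : a fixed point in [q, r]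
  rcases Nat.lt_or_ge m 2 with hm2 | hm2
  · interval_cases m
    obtain ⟨y, hy, hfy⟩ := fix_of_cross (hc.mono hI1)
      (⟨hqr.le, le_refl r⟩ : r ∈ Icc q r) (⟨le_refl q, hqr.le⟩ : q ∈ Icc q r)
      (by rw [h3]; linarith) (by rw [h2]; linarith)
    exact ⟨y, hI1 hy, by simpa using hfy, by omega⟩
  -- main case: m = n + 2
  obtain ⟨n, rfl⟩ : ∃ n, m = n + 2 := ⟨m - 2, by omega⟩
  -- a point w ∈ [q,r] with f w = q
  obtain ⟨w, hw, hfw⟩ : ∃ w ∈ Icc q r, f w = q := by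
    have : q ∈ Icc (f r) (f q) := by rw [h2, h3]; exact ⟨hpq.le, hqr.le⟩
    exact intermediate_value_Icc' hqr.le (hc.mono hI1) this
  -- the nested chain of intervals
  have chain : ∀ N : ℕ, ∃ s t : ℝ, q ≤ s ∧ s ≤ t ∧ t ≤ r ∧
      (∀ k ≤ N, f^[k] '' Icc s t ⊆ Icc q r) ∧ f^[N] '' Icc s t = Icc q r := by
    intro N
    induction N with
    | zero =>
        refine ⟨q, r, le_refl q, hqr.le, le_refl r, ?_, by simp⟩
        intro k hk
        interval_cases k
        simp
    | succ N ih =>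
        obtain ⟨s, t, hqs, hst, htr, hsub, himg⟩ := ih
        have hIcc : Icc s t ⊆ Icc q r := Icc_subset_Icc hqs htr
        -- preimages of q and r under f^[N+1] inside [s,t]
        obtain ⟨u, hu, hfu⟩ : ∃ u ∈ Icc s t, f^[N] u = w := by
          have : w ∈ f^[N] '' Icc s t := himg ▸ hw
          obtain ⟨u, hu, hfu⟩ := this
          exact ⟨u, hu, hfu⟩
        obtain ⟨v, hv, hfv⟩ : ∃ v ∈ Icc s t, f^[N] v = q := by
          have : q ∈ f^[N] '' Icc s t := himg ▸ (⟨le_refl q, hqr.le⟩ : q ∈ Icc q r)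
          obtain ⟨v, hv, hfv⟩ := this
          exact ⟨v, hv, hfv⟩
        have hgu : f^[N + 1] u = q := by
          rw [Function.iterate_succ_apply', hfu, hfw]
        have hgv : f^[N + 1] v = r := by
          rw [Function.iterate_succ_apply', hfv, h2]
        have hcN : ContinuousOn f^[N + 1] (Icc a b) := hitc (N + 1)
        rcases le_total u v with huv | hvu
        · obtain ⟨s', t', hs', hst', ht', him'⟩ := cov1 huv
            (hcN.mono ((Icc_subset_Icc hu.1 hv.2).trans (hIcc.trans hI1)))
            hgu hgv hqr.le
          have hsubst : Icc s' t' ⊆ Icc s t := Icc_subset_Icc (hu.1.trans hs') (ht'.trans hv.2)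
          refine ⟨s', t', hqs.trans (hu.1.trans hs'), hst', (ht'.trans hv.2).trans htr, ?_, him'⟩
          intro k hk
          rcases Nat.lt_or_ge k (N + 1) with hkN | hkN
          · exact (Set.image_mono hsubst).trans (hsub k (by omega))
          · have : k = N + 1 := by omega
            rw [this, him']
        · obtain ⟨s', t', hs', hst', ht', him'⟩ := cov2 hvu
            (hcN.mono ((Icc_subset_Icc hv.1 hu.2).trans (hIcc.trans hI1)))
            hgv hgu hqr.le
          have hsubst : Icc s' t' ⊆ Icc s t := Icc_subset_Icc (hv.1.trans hs') (ht'.trans hu.2)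
          refine ⟨s', t', hqs.trans (hv.1.trans hs'), hst', (ht'.trans hu.2).trans htr, ?_, him'⟩
          intro k hk
          rcases Nat.lt_or_ge k (N + 1) with hkN | hkN
          · exact (Set.image_mono hsubst).trans (hsub k (by omega))
          · have : k = N + 1 := by omega
            rw [this, him']
  obtain ⟨s, t, hqs, hst, htr, hsub, himg⟩ := chain n
  have hIcc : Icc s t ⊆ Icc q r := Icc_subset_Icc hqs htr
  -- last step: subinterval mapping exactly onto [p,q] under f^[n+1]
  obtain ⟨u, hu, hfu⟩ : ∃ u ∈ Icc s t, f^[n] u = r := by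
    have : r ∈ f^[n] '' Icc s t := himg ▸ (⟨hqr.le, le_refl r⟩ : r ∈ Icc q r)
    obtain ⟨u, hu, hfu⟩ := this; exact ⟨u, hu, hfu⟩
  obtain ⟨v, hv, hfv⟩ : ∃ v ∈ Icc s t, f^[n] v = w := by
    have : w ∈ f^[n] '' Icc s t := himg ▸ hw
    obtain ⟨v, hv, hfv⟩ := this; exact ⟨v, hv, hfv⟩
  have hgu : f^[n + 1] u = p := by rw [Function.iterate_succ_apply', hfu, h3]
  have hgv : f^[n + 1] v = q := by rw [Function.iterate_succ_apply', hfv, hfw]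
  have hcN : ContinuousOn f^[n + 1] (Icc a b) := hitc (n + 1)
  have hfinal : ∃ s' t', s ≤ s' ∧ s' ≤ t' ∧ t' ≤ t ∧
      f^[n + 1] '' Icc s' t' = Icc p q := by
    rcases le_total u v with huv | hvu
    · obtain ⟨s', t', hs', hst', ht', him'⟩ := cov1 huv
        (hcN.mono ((Icc_subset_Icc hu.1 hv.2).trans (hIcc.trans hI1))) hgu hgv hpq.le
      exact ⟨s', t', hu.1.trans hs', hst', ht'.trans hv.2, him'⟩
    · obtain ⟨s', t', hs', hst', ht', him'⟩ := cov2 hvu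
        (hcN.mono ((Icc_subset_Icc hv.1 hu.2).trans (hIcc.trans hI1))) hgv hgu hpq.le
      exact ⟨s', t', hv.1.trans hs', hst', ht'.trans hu.2, him'⟩
  obtain ⟨s', t', hss', hs't', ht't, himg'⟩ := hfinal
  have hsubst : Icc s' t' ⊆ Icc s t := Icc_subset_Icc hss' ht't
  have hJI1 : Icc s' t' ⊆ Icc q r := hsubst.trans hIcc
  -- find the fixed point of f^[n+2] in [s', t']
  obtain ⟨u₂, hu₂, hfu₂⟩ : ∃ z ∈ Icc s' t', f^[n + 1] z = p := by
    have : p ∈ f^[n + 1] '' Icc s' t' := himg' ▸ (⟨le_refl p, hpq.le⟩ : p ∈ Icc p q)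
    obtain ⟨z, hz, hfz⟩ := this; exact ⟨z, hz, hfz⟩
  obtain ⟨v₂, hv₂, hfv₂⟩ : ∃ z ∈ Icc s' t', f^[n + 1] z = q := by
    have : q ∈ f^[n + 1] '' Icc s' t' := himg' ▸ (⟨hpq.le, le_refl q⟩ : q ∈ Icc p q)
    obtain ⟨z, hz, hfz⟩ := this; exact ⟨z, hz, hfz⟩
  have hiter2u : f^[n + 2] u₂ = q := by rw [Function.iterate_succ_apply', hfu₂, h1]
  have hiter2v : f^[n + 2] v₂ = r := by rw [Function.iterate_succ_apply', hfv₂, h2]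
  obtain ⟨y, hy, hfy⟩ := fix_of_cross ((hitc (n + 2)).mono (hJI1.trans hI1)) hu₂ hv₂
    (by rw [hiter2u]; exact (hJI1 hu₂).1) (by rw [hiter2v]; exact (hJI1 hv₂).2)
  -- properties of y
  have hyI1 : ∀ k ≤ n, f^[k] y ∈ Icc q r := fun k hk =>
    hsub k hk ⟨y, hsubst hy, rfl⟩
  have hyI0 : f^[n + 1] y ∈ Icc p q := himg' ▸ ⟨y, hy, rfl⟩
  refine ⟨y, hI1 (hJI1 hy), hfy, ?_⟩
  intro k hk0 hkm hky
  -- f^[n+1] y = f^[(n+1) % k] y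
  have hperiodic : ∀ c : ℕ, f^[k * c] y = y := by
    intro c
    rw [Function.iterate_mul]
    exact Function.iterate_fixed hky c
  have hmod : f^[n + 1] y = f^[(n + 1) % k] y := by
    conv_lhs => rw [← Nat.mod_add_div (n + 1) k, Function.iterate_add_apply,
      hperiodic ((n + 1) / k)]
  have hjn : (n + 1) % k ≤ n := by
    have := Nat.mod_lt (n + 1) hk0
    omega
  have hyq : f^[n + 1] y = q := by
    have h1' : f^[n + 1] y ∈ Icc q r := hmod ▸ hyI1 _ hjn
    exact le_antisymm hyI0.2 h1'.1
  have hyr : y = r := by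
    rw [← hfy, show n + 2 = (n + 1) + 1 from rfl, Function.iterate_succ_apply', hyq, h2]
  rcases Nat.eq_zero_or_pos n with hn0 | hn0
  · -- m = 2, k = 1
    subst hn0
    have hk1 : k = 1 := by omega
    rw [hk1] at hky
    simp only [Function.iterate_one] at hky
    rw [hyr, h3] at hky
    linarith
  · -- n ≥ 1 : f y ∈ [q, r] but f y = p < q
    have := hyI1 1 hn0
    simp only [Function.iterate_one] at this
    rw [hyr, h3] at this
    linarith [this.1]

lemma case2 (a b : ℝ) (f : ℝ → ℝ)
    (hc : ContinuousOn f (Icc a b)) (hmaps : MapsTo f (Icc a b) (Icc a b))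
    (p q r : ℝ) (hp : p ∈ Icc a b) (hq : q ∈ Icc a b) (hr : r ∈ Icc a b)
    (hpq : p < q) (hqr : q < r) (h1 : f p = r) (h2 : f r = q) (h3 : f q = p)
    (m : ℕ) (hm : 0 < m) :
    ∃ y ∈ Icc a b, f^[m] y = y ∧ ∀ k, 0 < k → k < m → f^[k] y ≠ y := by
  set g : ℝ → ℝ := fun w => a + b - f (a + b - w) with hgdef
  have hreflm : MapsTo (fun w : ℝ => a + b - w) (Icc a b) (Icc a b) := fun w hw =>
    ⟨by simp at hw ⊢; linarith [hw.2], by simp at hw ⊢; linarith [hw.1]⟩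
  have hgc : ContinuousOn g (Icc a b) :=
    (continuous_const.sub continuous_id).comp_continuousOn
      (hc.comp (continuous_const.sub continuous_id).continuousOn hreflm)
  have hgm : MapsTo g (Icc a b) (Icc a b) := fun w hw => by
    have := hmaps (hreflm hw)
    exact ⟨by simp only [hgdef]; linarith [this.2], by simp only [hgdef]; linarith [this.1]⟩
  have key : ∀ w, g (a + b - w) = a + b - f w := by
    intro w
    simp only [hgdef]
    rw [show a + b - (a + b - w) = w by ring]
  have hconj : ∀ (N : ℕ) (w : ℝ), g^[N] (a + b - w) = a + b - f^[N] w := by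
    intro N
    induction N with
    | zero => intro w; simp
    | succ N ih =>
        intro w
        rw [Function.iterate_succ_apply, key, ih, Function.iterate_succ_apply]
  -- the conjugated cycle points
  have hmem : ∀ w : ℝ, w ∈ Icc a b → a + b - w ∈ Icc a b := fun w hw => hreflm hw
  have e1 : g (a + b - r) = a + b - q := by rw [key, h2]
  have e2 : g (a + b - q) = a + b - p := by rw [key, h3]
  have e3 : g (a + b - p) = a + b - r := by rw [key, h1]
  obtain ⟨y, hy, hfy, hleast⟩ := case1 a b g hgc hgm (a + b - r) (a + b - q) (a + b - p)
    (hmem r hr) (hmem q hq) (hmem p hp) (by linarith) (by linarith) e1 e2 e3 m hm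
  refine ⟨a + b - y, hmem y hy, ?_, ?_⟩
  · have := hconj m (a + b - y)
    rw [show a + b - (a + b - y) = y by ring] at this
    rw [hfy] at this
    linarith
  · intro k hk0 hkm hfk
    apply hleast k hk0 hkm
    have := hconj k (a + b - y)
    rw [show a + b - (a + b - y) = y by ring, hfk] at this
    linarith [this]

theorem period_three_implies_all_periods (a b : ℝ) (hab : a ≤ b) (f : ℝ → ℝ)
    (hc : ContinuousOn f (Set.Icc a b))
    (hmaps : Set.MapsTo f (Set.Icc a b) (Set.Icc a b))
    (x : ℝ) (hx : x ∈ Set.Icc a b)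
    (hx3 : f^[3] x = x ∧ ∀ k, 0 < k → k < 3 → f^[k] x ≠ x)
    (m : ℕ) (hm : 0 < m) :
    ∃ y ∈ Set.Icc a b, f^[m] y = y ∧ ∀ k, 0 < k → k < m → f^[k] y ≠ y := by
  obtain ⟨h3, hlt⟩ := hx3
  set x0 := x with hx0
  set x1 := f x with hx1
  set x2 := f (f x) with hx2
  have e01 : f x0 = x1 := rfl
  have e12 : f x1 = x2 := rfl
  have e20 : f x2 = x0 := by
    have : f^[3] x = f (f (f x)) := by
      simp [Function.iterate_succ_apply']
    rw [this] at h3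
    exact h3
  have hm1 : x1 ∈ Icc a b := hmaps hx
  have hm2 : x2 ∈ Icc a b := hmaps hm1
  have ne01 : x0 ≠ x1 := by
    have := hlt 1 (by norm_num) (by norm_num)
    simpa [Function.iterate_one] using fun h => this h.symm
  have ne02 : x0 ≠ x2 := by
    have := hlt 2 (by norm_num) (by norm_num)
    have h2 : f^[2] x = x2 := by simp [Function.iterate_succ_apply', x2]
    exact fun h => this (h2.trans h.symm)
  have ne12 : x1 ≠ x2 := by
    intro h
    apply ne02
    rw [← e20, ← h, e12, h]
  rcases lt_trichotomy x0 x1 with h01 | h01 | h01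
  · rcases lt_trichotomy x1 x2 with h12 | h12 | h12
    · -- x0 < x1 < x2
      exact case1 a b f hc hmaps x0 x1 x2 hx hm1 hm2 h01 h12 e01 e12 e20 m hm
    · exact absurd h12 ne12
    · rcases lt_trichotomy x0 x2 with h02 | h02 | h02
      · -- x0 < x2 < x1
        exact case2 a b f hc hmaps x0 x2 x1 hx hm2 hm1 h02 h12 e01 e12 e20 m hm
      · exact absurd h02 ne02
      · -- x2 < x0 < x1
        exact case1 a b f hc hmaps x2 x0 x1 hm2 hx hm1 h02 h01 e20 e01 e12 m hm
  · exact absurd h01 ne01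
  · rcases lt_trichotomy x1 x2 with h12 | h12 | h12
    · rcases lt_trichotomy x0 x2 with h02 | h02 | h02
      · -- x1 < x0 < x2
        exact case2 a b f hc hmaps x1 x0 x2 hm1 hx hm2 h01 h02 e12 e20 e01 m hm
      · exact absurd h02 ne02
      · -- x1 < x2 < x0
        exact case1 a b f hc hmaps x1 x2 x0 hm1 hm2 hx h12 h02 e12 e20 e01 m hm
    · exact absurd h12 ne12
    · -- x2 < x1 < x0
      exact case2 a b f hc hmaps x2 x1 x0 hm2 hm1 hx h12 h01 e20 e01 e12 m hm
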